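/- Let Δ be a 0-normalized Γ_{m,n}-semimodule and define g(y) = #([y, y+n) ∖ Δ) for y ∈ ℤ. Then for every x ∈ ℤ: (1) g(x−m) = g(x) + #{m-generators of Δ in [x, x+n)}; (2) g(x) = g(x+m) + #{m-cogenerators of Δ in [x, x+n)}; (3) the number of m-generators of Δ in [x, x+n) equals the number of n-cogenerators of Δ in [x−m, x). -/
import Mathlib

/-- The numerical semigroup generated by `m` and `n`, viewed as a subset of `ℤ`. -/
def Gamma (m n : ℕ) : Set ℤ := {x : ℤ | ∃ u v : ℕ, x = u * m + v * n}

/-- A 0-normalized `Γ_{m,n}`-semimodule: a subset of `ℤ≥0` containing `0` and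
closed under adding `m` and `n`. -/
def IsSemimodule (m n : ℕ) (Δ : Set ℤ) : Prop :=
  (∀ x ∈ Δ, 0 ≤ x) ∧ (0 : ℤ) ∈ Δ ∧ (∀ x ∈ Δ, x + m ∈ Δ) ∧ (∀ x ∈ Δ, x + n ∈ Δ)

/-- The number of gaps of `Δ` in the interval `[x, x + n)`. -/
noncomputable def gapCount (n : ℕ) (Δ : Set ℤ) (x : ℤ) : ℕ :=
  ({y : ℤ | x ≤ y ∧ y < x + n} \ Δ).ncard

private lemma shift_count (Δ : Set ℤ) [DecidablePred (· ∈ Δ)] (d x L : ℤ)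
    (P : ℤ → Prop) [DecidablePred P] :
    ((Finset.Ico x (x+L)).filter (fun y => P (y + d))).card
      = ((Finset.Ico (x+d) (x+d+L)).filter P).card := by
  apply Finset.card_bij' (fun a _ => a + d) (fun b _ => b - d)
  · intro a ha
    simp only [Finset.mem_filter, Finset.mem_Ico] at ha ⊢
    refine ⟨⟨by omega, by omega⟩, ha.2⟩
  · intro b hb
    simp only [Finset.mem_filter, Finset.mem_Ico] at hb ⊢
    refine ⟨⟨by omega, by omega⟩, by simpa using hb.2⟩
  · intro a _; ring
  · intro b _; ring

private lemma split_count {s : Finset ℤ} {p q : ℤ → Prop} [DecidablePred p] [DecidablePred q]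
    (h : ∀ y ∈ s, q y → p y) :
    (s.filter p).card = (s.filter q).card + (s.filter (fun y => p y ∧ ¬ q y)).card := by
  have key := Finset.card_filter_add_card_filter_not (s := s.filter p) (p := q)
  rw [Finset.filter_filter, Finset.filter_filter] at key
  have h1 : s.filter (fun a => p a ∧ q a) = s.filter q := by
    apply Finset.filter_congr
    intro y hy
    constructor
    · tauto
    · intro hq; exact ⟨h y hy hq, hq⟩
  rw [h1] at key
  omega

private lemma ncard_window (Q : ℤ → Prop) [DecidablePred Q] (x y : ℤ) :
    {a : ℤ | Q a ∧ x ≤ a ∧ a < y}.ncard = ((Finset.Ico x y).filter Q).card := by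
  rw [← Set.ncard_coe_finset]
  congr 1
  ext a
  simp only [Set.mem_setOf_eq, Finset.coe_filter, Finset.mem_Ico]
  tauto

private lemma gapCount_eq (n : ℕ) (Δ : Set ℤ) [DecidablePred (· ∈ Δ)] (x : ℤ) :
    gapCount n Δ x = ((Finset.Ico x (x + (n:ℤ))).filter (fun y => y ∉ Δ)).card := by
  rw [gapCount, ← ncard_window (fun y => y ∉ Δ) x (x + n)]
  congr 1
  ext a
  simp only [Set.mem_diff, Set.mem_setOf_eq]
  tauto

private lemma exists_bound (m n : ℕ) (hm : 0 < m) (hn : 0 < n) (hmn : Nat.Coprime m n)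
    (Δ : Set ℤ) (hΔ : IsSemimodule m n Δ) : ∃ N : ℤ, ∀ z : ℤ, N ≤ z → z ∈ Δ := by
  obtain ⟨-, h0, hm', hn'⟩ := hΔ
  have hu : ∀ (u : ℕ) (x : ℤ), x ∈ Δ → x + u * m ∈ Δ := by
    intro u
    induction u with
    | zero => simp
    | succ k ih =>
        intro x hx
        have := hm' _ (ih x hx)
        convert this using 1
        push_cast; ring
  have hv : ∀ (v : ℕ) (x : ℤ), x ∈ Δ → x + v * n ∈ Δ := by
    intro v
    induction v with
    | zero => simp
    | succ k ih =>
        intro x hx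
        have := hn' _ (ih x hx)
        convert this using 1
        push_cast; ring
  refine ⟨(m : ℤ) * n, fun z hz => ?_⟩
  haveI : NeZero n := ⟨hn.ne'⟩
  set u : ℕ := ((z : ZMod n) * (m : ZMod n)⁻¹).val with hu_def
  have hlt : u < n := ZMod.val_lt _
  have hunit : IsUnit (m : ZMod n) := (ZMod.isUnit_iff_coprime m n).mpr hmn
  have hdvd : (n : ℤ) ∣ z - u * m := by
    have h0' : ((z - u * m : ℤ) : ZMod n) = 0 := by
      push_cast
      rw [hu_def, ZMod.natCast_val, ZMod.cast_id]
      rw [mul_assoc, ZMod.inv_mul_of_unit _ hunit, mul_one]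
      ring
    exact (ZMod.intCast_zmod_eq_zero_iff_dvd _ n).mp h0'
  obtain ⟨k, hk⟩ := hdvd
  have hk0 : 0 ≤ k := by
    have h1 : (u : ℤ) * m ≤ ((n : ℤ) - 1) * m := by
      have hle : (u : ℤ) ≤ (n : ℤ) - 1 := by
        have : (u : ℤ) < (n : ℤ) := by exact_mod_cast hlt
        omega
      exact mul_le_mul_of_nonneg_right hle (by positivity)
    nlinarith [hk, hz]
  have : z = (0 : ℤ) + u * m + k.toNat * n := by
    rw [Int.toNat_of_nonneg hk0]
    linarith [hk]
  rw [this]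
  exact hv _ _ (hu _ _ h0)

private lemma G_split (Δ : Set ℤ) [DecidablePred (· ∈ Δ)] {N : ℤ} (hN : ∀ z : ℤ, N ≤ z → z ∈ Δ)
    (y L : ℤ) (hL : 0 ≤ L) :
    ({z : ℤ | y ≤ z} \ Δ).ncard
      = ((Finset.Ico y (y + L)).filter (fun z => z ∉ Δ)).card + ({z : ℤ | y + L ≤ z} \ Δ).ncard := by
  have hfin : ∀ w : ℤ, ({z : ℤ | w ≤ z} \ Δ).Finite := by
    intro w
    apply (Set.finite_Ico w (max w N)).subset
    rintro z ⟨h1, h2⟩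
    refine ⟨h1, ?_⟩
    by_contra hc
    push_neg at hc
    exact h2 (hN z (le_trans (le_max_right w N) hc))
  have hset : ({z : ℤ | y ≤ z} \ Δ)
      = (↑((Finset.Ico y (y + L)).filter (fun z => z ∉ Δ)) ∪ ({z : ℤ | y + L ≤ z} \ Δ)) := by
    ext z
    simp only [Set.mem_diff, Set.mem_setOf_eq, Set.mem_union, Finset.coe_filter, Finset.mem_Ico]
    by_cases hz : z ∈ Δ <;> simp [hz] <;> omega
  rw [hset, Set.ncard_union_eq ?disj (Finset.finite_toSet _) (hfin _), Set.ncard_coe_finset]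
  case disj =>
    rw [Set.disjoint_left]
    intro z hz1 hz2
    simp only [Finset.coe_filter, Finset.mem_Ico, Set.mem_setOf_eq] at hz1
    rw [Set.mem_diff, Set.mem_setOf_eq] at hz2
    obtain ⟨⟨-, h2⟩, -⟩ := hz1
    obtain ⟨h3, -⟩ := hz2
    omega

/-- **Counting generators and cogenerators in an interval.** For a 0-normalized
`Γ_{m,n}`-semimodule `Δ`, `g(x) = #([x, x+n) ∖ Δ)` and every `x ∈ ℤ`:
(1) `g(x-m) = g(x) + #{m-generators in [x, x+n)}`;
(2) `g(x) = g(x+m) + #{m-cogenerators in [x, x+n)}`;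
(3) `#{m-generators in [x, x+n)} = #{n-cogenerators in [x-m, x)}`. -/
theorem gapCount_generators_cogenerators (m n : ℕ) (hm : 0 < m) (hn : 0 < n)
    (hmn : Nat.Coprime m n) (Δ : Set ℤ) (hΔ : IsSemimodule m n Δ) (x : ℤ) :
    gapCount n Δ (x - m) =
        gapCount n Δ x + {a : ℤ | (a ∈ Δ ∧ a - m ∉ Δ) ∧ x ≤ a ∧ a < x + n}.ncard ∧
    gapCount n Δ x =
        gapCount n Δ (x + m) + {b : ℤ | (b ∉ Δ ∧ b + m ∈ Δ) ∧ x ≤ b ∧ b < x + n}.ncard ∧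
    {a : ℤ | (a ∈ Δ ∧ a - m ∉ Δ) ∧ x ≤ a ∧ a < x + n}.ncard =
        {b : ℤ | (b ∉ Δ ∧ b + n ∈ Δ) ∧ x - m ≤ b ∧ b < x}.ncard := by
  classical
  obtain ⟨N, hN⟩ := exists_bound m n hm hn hmn Δ hΔ
  obtain ⟨hpos, h0, hmem_m, hmem_n⟩ := hΔ
  -- key1: for any step d under which Δ is closed, any interval length L:
  have key1 : ∀ (d L : ℕ) (y : ℤ), (∀ z ∈ Δ, z + (d:ℤ) ∈ Δ) →
      ((Finset.Ico (y - d) (y - d + L)).filter (fun z => z ∉ Δ)).card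
        = ((Finset.Ico y (y + (L:ℤ))).filter (fun z => z ∉ Δ)).card
          + ((Finset.Ico y (y + (L:ℤ))).filter (fun a => a ∈ Δ ∧ a - d ∉ Δ)).card := by
    intro d L y hcl
    have h1 := shift_count Δ (-(d:ℤ)) y L (fun z => z ∉ Δ)
    rw [show y + -(d:ℤ) = y - d by ring] at h1
    rw [← h1]
    have h2 := split_count (s := Finset.Ico y (y + (L:ℤ)))
      (p := fun z => z + -(d:ℤ) ∉ Δ) (q := fun z => z ∉ Δ) ?_
    · rw [h2]
      have heq : (Finset.Ico y (y + (L:ℤ))).filter (fun z => z + -(d:ℤ) ∉ Δ ∧ ¬ z ∉ Δ)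
          = (Finset.Ico y (y + (L:ℤ))).filter (fun a => a ∈ Δ ∧ a - (d:ℤ) ∉ Δ) := by
        apply Finset.filter_congr
        intro a _
        constructor
        · rintro ⟨hp, hq⟩
          exact ⟨not_not.mp hq, by rwa [sub_eq_add_neg]⟩
        · rintro ⟨h1', h2'⟩
          exact ⟨by rwa [← sub_eq_add_neg], not_not.mpr h1'⟩
      rw [heq]
    · intro z _ hq hc
      exact hq (by simpa using hcl _ hc)
  have key2 : ∀ (d L : ℕ) (y : ℤ), (∀ z ∈ Δ, z + (d:ℤ) ∈ Δ) →
      ((Finset.Ico y (y + (L:ℤ))).filter (fun z => z ∉ Δ)).card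
        = ((Finset.Ico (y + d) (y + d + L)).filter (fun z => z ∉ Δ)).card
          + ((Finset.Ico y (y + (L:ℤ))).filter (fun b => b ∉ Δ ∧ b + d ∈ Δ)).card := by
    intro d L y hcl
    have h1 := shift_count Δ (d:ℤ) y L (fun z => z ∉ Δ)
    rw [← h1]
    have h2 := split_count (s := Finset.Ico y (y + (L:ℤ)))
      (p := fun z => z ∉ Δ) (q := fun z => z + (d:ℤ) ∉ Δ) ?_
    · rw [h2]
      have heq : (Finset.Ico y (y + (L:ℤ))).filter (fun z => z ∉ Δ ∧ ¬ z + (d:ℤ) ∉ Δ)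
          = (Finset.Ico y (y + (L:ℤ))).filter (fun b => b ∉ Δ ∧ b + (d:ℤ) ∈ Δ) := by
        apply Finset.filter_congr
        intro a _
        constructor
        · rintro ⟨hp, hq⟩
          exact ⟨hp, not_not.mp hq⟩
        · rintro ⟨h1', h2'⟩
          exact ⟨h1', not_not.mpr h2'⟩
      rw [heq]
    · intro z _ hq hc
      exact hq (hcl _ hc)
  have part1 : gapCount n Δ (x - m) =
      gapCount n Δ x + {a : ℤ | (a ∈ Δ ∧ a - m ∉ Δ) ∧ x ≤ a ∧ a < x + n}.ncard := by
    rw [gapCount_eq, gapCount_eq, ncard_window (fun a => a ∈ Δ ∧ a - (m:ℤ) ∉ Δ) x (x + n)]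
    exact key1 m n x hmem_m
  have part2 : gapCount n Δ x =
      gapCount n Δ (x + m) + {b : ℤ | (b ∉ Δ ∧ b + m ∈ Δ) ∧ x ≤ b ∧ b < x + n}.ncard := by
    rw [gapCount_eq, gapCount_eq, ncard_window (fun b => b ∉ Δ ∧ b + (m:ℤ) ∈ Δ) x (x + n)]
    exact key2 m n x hmem_m
  refine ⟨part1, part2, ?_⟩
  -- part 3
  rw [ncard_window (fun a => a ∈ Δ ∧ a - (m:ℤ) ∉ Δ) x (x + n),
      ncard_window (fun b => b ∉ Δ ∧ b + (n:ℤ) ∈ Δ) (x - m) x]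
  have k1 := key1 m n x hmem_m
  have k2 := key2 n m (x - m) hmem_n
  have e1 := G_split Δ hN (x - m) n (by positivity)
  have e2 := G_split Δ hN (x - m) m (by positivity)
  have e3 := G_split Δ hN (x - m + n) m (by positivity)
  have e4 := G_split Δ hN (x - m + m) n (by positivity)
  have r1 : x - (m:ℤ) + m = x := by ring
  have r2 : x - (m:ℤ) + n + m = x + n := by ring
  rw [r1] at e2 e4 k2
  rw [r2] at e3 k2
  omega
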